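/- Lemma (summation-by-parts counting bound, inverse rate). Let q ≥ 1 be an integer, let v_1 ≥ v_2 ≥ … ≥ v_q > 0 be reals, and let C > 0. Then ⌊C/v_q⌋·v_q + Σ_{p=1}^{q−1} ⌊C/v_p⌋·(v_p − v_{p+1}) ≤ C·( 1 + log(v_1/v_q) ). -/

import Mathlib

open Finset

/-- Lemma (summation-by-parts counting bound, inverse rate):
for `v_1 ≥ … ≥ v_q > 0` and `C > 0`,
`⌊C/v_q⌋·v_q + Σ_{p=1}^{q−1} ⌊C/v_p⌋·(v_p − v_{p+1}) ≤ C (1 + log(v_1/v_q))`. -/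
theorem counting_bound_inverse (q : ℕ) (hq : 1 ≤ q) (v : ℕ → ℝ)
    (hmono : ∀ p, 1 ≤ p → p < q → v (p+1) ≤ v p)
    (hpos : ∀ p, 1 ≤ p → p ≤ q → 0 < v p)
    (C : ℝ) (hC : 0 < C) :
    (⌊C / v q⌋ : ℝ) * v q
        + ∑ p ∈ Finset.Icc 1 (q-1), (⌊C / v p⌋ : ℝ) * (v p - v (p+1))
      ≤ C * (1 + Real.log (v 1 / v q)) := by
  have hvq : 0 < v q := hpos q hq le_rfl
  -- bound the first term by C
  have h1 : (⌊C / v q⌋ : ℝ) * v q ≤ C := by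
    calc (⌊C / v q⌋ : ℝ) * v q ≤ (C / v q) * v q :=
          mul_le_mul_of_nonneg_right (Int.floor_le _) hvq.le
      _ = C := div_mul_cancel₀ _ hvq.ne'
  -- bound each summand by C * (log (v p) - log (v (p+1)))
  have h2 : ∀ p ∈ Finset.Icc 1 (q-1),
      (⌊C / v p⌋ : ℝ) * (v p - v (p+1)) ≤ C * (Real.log (v p) - Real.log (v (p+1))) := by
    intro p hp
    rw [Finset.mem_Icc] at hp
    obtain ⟨hp1, hp2⟩ := hp
    have hplt : p < q := lt_of_le_of_lt hp2 (Nat.sub_lt (by omega) one_pos)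
    have hvp : 0 < v p := hpos p hp1 hplt.le
    have hvp1 : 0 < v (p+1) := hpos (p+1) (by omega) (by omega)
    have hle : v (p+1) ≤ v p := hmono p hp1 hplt
    have step1 : (⌊C / v p⌋ : ℝ) * (v p - v (p+1)) ≤ (C / v p) * (v p - v (p+1)) :=
      mul_le_mul_of_nonneg_right (Int.floor_le _) (by linarith)
    have step2 : (C / v p) * (v p - v (p+1)) = C * (1 - v (p+1) / v p) := by
      field_simp
    have step3 : 1 - v (p+1) / v p ≤ Real.log (v p) - Real.log (v (p+1)) := by
      have := Real.log_le_sub_one_of_pos (div_pos hvp1 hvp)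
      rw [Real.log_div hvp1.ne' hvp.ne'] at this
      linarith
    calc (⌊C / v p⌋ : ℝ) * (v p - v (p+1)) ≤ C * (1 - v (p+1) / v p) := by
          rw [← step2]; exact step1
      _ ≤ C * (Real.log (v p) - Real.log (v (p+1))) :=
          mul_le_mul_of_nonneg_left step3 hC.le
  -- telescoping
  have h3 : ∑ p ∈ Finset.Icc 1 (q-1), (Real.log (v p) - Real.log (v (p+1)))
      = Real.log (v 1) - Real.log (v q) := by
    have key : ∀ n : ℕ, ∑ p ∈ Finset.Icc 1 n, (Real.log (v p) - Real.log (v (p+1)))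
        = Real.log (v 1) - Real.log (v (n+1)) := by
      intro n
      induction n with
      | zero => simp
      | succ m ih =>
        rw [Finset.sum_Icc_succ_top (by omega : 1 ≤ m + 1), ih]
        ring
    have := key (q-1)
    have hq1 : q - 1 + 1 = q := by omega
    rwa [hq1] at this
  have hvq1 : 0 < v 1 := hpos 1 le_rfl hq
  have hsum : ∑ p ∈ Finset.Icc 1 (q-1), (⌊C / v p⌋ : ℝ) * (v p - v (p+1))
      ≤ C * (Real.log (v 1) - Real.log (v q)) := by
    calc ∑ p ∈ Finset.Icc 1 (q-1), (⌊C / v p⌋ : ℝ) * (v p - v (p+1))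
        ≤ ∑ p ∈ Finset.Icc 1 (q-1), C * (Real.log (v p) - Real.log (v (p+1))) :=
          Finset.sum_le_sum h2
      _ = C * ∑ p ∈ Finset.Icc 1 (q-1), (Real.log (v p) - Real.log (v (p+1))) :=
          (Finset.mul_sum _ _ _).symm
      _ = C * (Real.log (v 1) - Real.log (v q)) := by rw [h3]
  rw [Real.log_div hvq1.ne' hvq.ne']
  linarith
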